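/- If a group G is acyclic (H_k(G;ℝ) ≅ 0 for all k > 0) and G satisfies the q-uniform boundary condition, then H_b^{q+1}(G;ℝ) ≅ 0. -/

import Mathlib

open scoped Classical

/-- the degree-`k` part of the bar complex of `G` with real coefficients,
i.e. the free `ℝ`-vector space on `G^k`. -/
abbrev barC (G : Type*) (k : ℕ) : Type _ := (Fin k → G) →₀ ℝ

/-- the ℓ¹-norm on the bar complex, with respect to the basis of tuples. -/
noncomputable def l1Norm {α : Type*} (c : α →₀ ℝ) : ℝ := ∑ a ∈ c.support, |c a|

/-- the boundary operator `∂_{m+1} : C_{m+1}(G;ℝ) → C_m(G;ℝ)` of the bar complex: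
`∂(g_1,…,g_k) = (g_2,…,g_k) + ∑_{j=1}^{k-1} (-1)^j (g_1,…,g_j·g_{j+1},…,g_k) + (-1)^k (g_1,…,g_{k-1})`. -/
noncomputable def barBoundary (G : Type*) [Group G] (m : ℕ) :
    barC G (m + 1) →ₗ[ℝ] barC G m :=
  Finsupp.lsum ℝ fun g => LinearMap.toSpanSingleton ℝ _
    (Finsupp.single (Fin.tail g) 1
      + ∑ j : Fin (m + 1),
          ((-1 : ℝ) ^ ((j : ℕ) + 1)) • Finsupp.single (Fin.contractNth j (· * ·) g) 1)

/-- boundedness of a real-valued function. -/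
def Bddf {α : Type*} (f : α → ℝ) : Prop := ∃ C : ℝ, ∀ x, |f x| ≤ C

/-- the coboundary operator on inhomogeneous cochains, dual to the bar boundary. -/
noncomputable def cobnd (G : Type*) [Group G] (n : ℕ) (f : (Fin n → G) → ℝ) :
    (Fin (n + 1) → G) → ℝ :=
  fun g => f (Fin.tail g)
    + ∑ j : Fin (n + 1), (-1 : ℝ) ^ ((j : ℕ) + 1) * f (Fin.contractNth j (· * ·) g)

section Aux

variable {α : Type*}

lemma l1Norm_eq_sum (c : α →₀ ℝ) {s : Finset α} (hs : c.support ⊆ s) :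
    l1Norm c = ∑ a ∈ s, |c a| := by
  rw [l1Norm]
  exact Finset.sum_subset hs fun x _ hx => by
    simp [Finsupp.notMem_support_iff.mp hx]

lemma l1Norm_add_le (x y : α →₀ ℝ) : l1Norm (x + y) ≤ l1Norm x + l1Norm y := by
  have h1 : x.support ⊆ x.support ∪ y.support := Finset.subset_union_left
  have h2 : y.support ⊆ x.support ∪ y.support := Finset.subset_union_right
  rw [l1Norm_eq_sum (x + y) (Finsupp.support_add), l1Norm_eq_sum x h1,
    l1Norm_eq_sum y h2, ← Finset.sum_add_distrib]
  refine Finset.sum_le_sum fun a _ => ?_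
  simpa using abs_add_le (x a) (y a)

lemma l1Norm_smul (r : ℝ) (x : α →₀ ℝ) : l1Norm (r • x) = |r| * l1Norm x := by
  rcases eq_or_ne r 0 with h | h
  · simp [h, l1Norm]
  · have hs : (r • x).support = x.support := by
      ext a
      simp [Finsupp.mem_support_iff, Finsupp.smul_apply, smul_eq_mul, h]
    rw [l1Norm, hs, l1Norm, Finset.mul_sum]
    exact Finset.sum_congr rfl fun a _ => by
      simp [Finsupp.smul_apply, smul_eq_mul, abs_mul]

lemma l1Norm_neg (x : α →₀ ℝ) : l1Norm (-x) = l1Norm x := by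
  simpa using l1Norm_smul (-1) x

lemma l1Norm_single_one (a : α) : l1Norm (Finsupp.single a (1 : ℝ)) = 1 := by
  rw [l1Norm, Finsupp.support_single_ne_zero a one_ne_zero]
  simp

lemma abs_linearCombination_le (f : α → ℝ) {M : ℝ} (hM : ∀ x, |f x| ≤ M)
    (c : α →₀ ℝ) : |Finsupp.linearCombination ℝ f c| ≤ M * l1Norm c := by
  rw [Finsupp.linearCombination_apply, Finsupp.sum, l1Norm, Finset.mul_sum]
  refine le_trans (Finset.abs_sum_le_sum_abs _ _) (Finset.sum_le_sum fun a _ => ?_)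
  rw [smul_eq_mul, abs_mul, mul_comm M]
  exact mul_le_mul_of_nonneg_left (hM a) (abs_nonneg _)

end Aux

/-- adjointness of the bar boundary and the inhomogeneous coboundary. -/
lemma adj_bnd {G : Type*} [Group G] (m : ℕ) (f : (Fin m → G) → ℝ) :
    (Finsupp.linearCombination ℝ f).comp (barBoundary G m)
      = Finsupp.linearCombination ℝ (cobnd G m f) := by
  refine Finsupp.lhom_ext fun g r => ?_
  simp only [LinearMap.comp_apply, barBoundary, cobnd, Finsupp.lsum_single,
    LinearMap.toSpanSingleton_apply, Finsupp.linearCombination_single, map_smul, map_add,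
    map_sum, Finsupp.linearCombination_single, smul_eq_mul, smul_add, Finset.mul_sum]
  ring_nf
  rw [Finset.mul_sum]
  simp [mul_assoc]

/-- if `G` is acyclic (`H_k(G;ℝ) ≅ 0` for all `k > 0`, i.e. every cycle
of positive degree in the bar complex is a boundary) and `G` satisfies the `q`-uniform
boundary condition, then `H_b^{q+1}(G;ℝ) ≅ 0`, i.e. every bounded `(q+1)`-cocycle is the
coboundary of a bounded `q`-cochain. -/
theorem acyclic_ubc_implies_bounded_cohomology_vanishes (G : Type*) [Group G] (q : ℕ)
    (hacyc : ∀ (m : ℕ) (z : barC G (m + 1)), barBoundary G m z = 0 →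
        z ∈ LinearMap.range (barBoundary G (m + 1)))
    (hubc : ∃ κ : ℝ, 0 < κ ∧ ∀ z ∈ LinearMap.range (barBoundary G q),
        ∃ c : barC G (q + 1), barBoundary G q c = z ∧ l1Norm c ≤ κ * l1Norm z) :
    ∀ f : (Fin (q + 1) → G) → ℝ, Bddf f → cobnd G (q + 1) f = 0 →
      ∃ u : (Fin q → G) → ℝ, Bddf u ∧ cobnd G q u = f := by
  obtain ⟨κ, hκ, hubc⟩ := hubc
  intro f hf hcf
  obtain ⟨M, hM⟩ := hf
  have hM0 : 0 ≤ M := le_trans (abs_nonneg _) (hM fun _ => 1)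
  set D := barBoundary G q with hD
  set φ : barC G (q + 1) →ₗ[ℝ] ℝ := Finsupp.linearCombination ℝ f with hφ
  -- φ vanishes on cycles
  have hker : LinearMap.ker D ≤ LinearMap.ker φ := by
    intro c hc
    obtain ⟨w, hw⟩ := hacyc q c (LinearMap.mem_ker.mp hc)
    have h1 := congrArg (fun L => L w) (adj_bnd (q + 1) f)
    simp only [LinearMap.comp_apply, hcf] at h1
    rw [LinearMap.mem_ker, hφ, ← hw, h1]
    simp [Finsupp.linearCombination_apply]
  -- the functional on boundaries
  set F : LinearMap.range D →ₗ[ℝ] ℝ :=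
    (Submodule.liftQ _ φ hker).comp D.quotKerEquivRange.symm.toLinearMap with hFdef
  have hF : ∀ c : barC G (q + 1), F ⟨D c, LinearMap.mem_range_self D c⟩ = φ c := by
    intro c
    have h2 : D.quotKerEquivRange.symm ⟨D c, LinearMap.mem_range_self D c⟩
        = Submodule.Quotient.mk c := by
      rw [LinearEquiv.symm_apply_eq]
      exact Subtype.ext (D.quotKerEquivRange_apply_mk c).symm
    simp [hFdef, h2]
  set B := M * κ with hB
  have hB0 : 0 ≤ B := mul_nonneg hM0 hκ.le
  have hbound : ∀ z : LinearMap.range D, |F z| ≤ B * l1Norm (z : barC G q) := by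
    rintro ⟨z, hz⟩
    obtain ⟨c, hc, hcn⟩ := hubc z hz
    have h7 : F ⟨z, hz⟩ = φ c := by
      have hzc : (⟨z, hz⟩ : LinearMap.range D) = ⟨D c, LinearMap.mem_range_self D c⟩ :=
        Subtype.ext hc.symm
      rw [hzc]; exact hF c
    rw [h7]
    calc |φ c| ≤ M * l1Norm c := abs_linearCombination_le f hM c
      _ ≤ M * (κ * l1Norm z) := mul_le_mul_of_nonneg_left hcn hM0
      _ = B * l1Norm z := by rw [hB]; ring
  -- Hahn–Banach extension
  obtain ⟨gext, hg1, hg2⟩ := exists_extension_of_le_sublinear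
    ⟨LinearMap.range D, F⟩ (fun x => B * l1Norm x)
    (fun c hc x => by
      show B * l1Norm (c • x) = c * (B * l1Norm x)
      rw [l1Norm_smul, abs_of_pos hc]; ring)
    (fun x y => by
      have := mul_le_mul_of_nonneg_left (l1Norm_add_le x y) hB0
      rw [mul_add] at this; exact this)
    (fun x => le_trans (le_abs_self _) (hbound x))
  have hgabs : ∀ x, |gext x| ≤ B * l1Norm x := by
    intro x
    rw [abs_le]
    constructor
    · have h3 := hg2 (-x)
      rw [map_neg, l1Norm_neg] at h3
      linarith
    · exact hg2 x
  set u : (Fin q → G) → ℝ := fun a => gext (Finsupp.single a 1) with hu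
  have hulc : Finsupp.linearCombination ℝ u = gext := by
    refine Finsupp.lhom_ext fun a b => ?_
    rw [Finsupp.linearCombination_single, hu]
    rw [← gext.map_smul, Finsupp.smul_single, smul_eq_mul, mul_one]
  refine ⟨u, ⟨B, fun a => ?_⟩, ?_⟩
  · have := hgabs (Finsupp.single a 1)
    rwa [l1Norm_single_one, mul_one] at this
  · funext g0
    have h4 := congrArg (fun L => L (Finsupp.single g0 (1 : ℝ))) (adj_bnd q u)
    simp only [LinearMap.comp_apply, Finsupp.linearCombination_single, one_smul, hulc] at h4
    -- h4 : gext (D (single g0 1)) = cobnd G q u g0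
    have h5 : gext (D (Finsupp.single g0 1)) = f g0 := by
      have h6 := hg1 ⟨D (Finsupp.single g0 1), LinearMap.mem_range_self D _⟩
      rw [LinearPMap.mk_apply] at h6
      rw [h6, hF, hφ, Finsupp.linearCombination_single, one_smul]
    rw [← h4, h5]
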